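/- Let A ∈ ℝ^{n×n}, B ∈ ℝ^{n×m}, and let R₁ ∈ ℝ^{m×m} be symmetric. Let v ∈ ℝⁿ be nonzero with Aᵀv = λv for some λ ∈ ℝ, let q₁ ≥ 0, and suppose r₁ := vᵀBR₁Bᵀv > 0. Set p₁ = (λ + √(λ² + q₁r₁))/r₁. Then P₁ = p₁·vvᵀ is symmetric positive semidefinite and satisfies the Riccati equation P₁A + AᵀP₁ − P₁BR₁BᵀP₁ + q₁·vvᵀ = 0. -/

import Mathlib

open Matrix

lemma vecMulVec_mul_left' {n : ℕ} (A : Matrix (Fin n) (Fin n) ℝ) (v w : Fin n → ℝ) :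
    Matrix.vecMulVec v w * A = Matrix.vecMulVec v (Aᵀ.mulVec w) := by
  ext i j
  simp only [Matrix.mul_apply, Matrix.vecMulVec_apply, Matrix.mulVec, dotProduct,
    Matrix.transpose_apply, Finset.mul_sum]
  exact Finset.sum_congr rfl fun k _ => by ring

lemma mul_vecMulVec_left' {n : ℕ} (A : Matrix (Fin n) (Fin n) ℝ) (v w : Fin n → ℝ) :
    A * Matrix.vecMulVec v w = Matrix.vecMulVec (A.mulVec v) w := by
  ext i j
  simp only [Matrix.mul_apply, Matrix.vecMulVec_apply, Matrix.mulVec, dotProduct,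
    Finset.sum_mul]
  exact Finset.sum_congr rfl fun k _ => by ring

lemma vecMulVec_mulVec' {n : ℕ} (v w x : Fin n → ℝ) :
    (Matrix.vecMulVec v w).mulVec x = (w ⬝ᵥ x) • v := by
  ext i
  simp only [Matrix.mulVec, dotProduct, Matrix.vecMulVec_apply, Pi.smul_apply,
    smul_eq_mul, Finset.sum_mul, Finset.mul_sum]
  exact Finset.sum_congr rfl fun k _ => by ring

lemma vecMulVec_mul_vecMulVec' {n : ℕ} (a b c d : Fin n → ℝ) :
    Matrix.vecMulVec a b * Matrix.vecMulVec c d = (b ⬝ᵥ c) • Matrix.vecMulVec a d := by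
  ext i j
  simp only [Matrix.mul_apply, Matrix.vecMulVec_apply, Matrix.smul_apply, smul_eq_mul,
    dotProduct, Finset.sum_mul, Finset.mul_sum]
  exact Finset.sum_congr rfl fun k _ => by ring

/-- Rank-one Riccati solution: if `Aᵀv = λv` with `v ≠ 0`, `q₁ ≥ 0`,
`r₁ = vᵀBR₁Bᵀv > 0`, and `p₁ = (λ + √(λ² + q₁r₁))/r₁`, then `P₁ = p₁ vvᵀ` is symmetric
positive semidefinite and satisfies `P₁A + AᵀP₁ − P₁BR₁BᵀP₁ + q₁ vvᵀ = 0`. -/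
theorem stmt_6 {n m : ℕ}
    (A : Matrix (Fin n) (Fin n) ℝ) (B : Matrix (Fin n) (Fin m) ℝ)
    (R₁ : Matrix (Fin m) (Fin m) ℝ) (hR₁ : R₁.IsSymm)
    (v : Fin n → ℝ) (hv : v ≠ 0) (lam : ℝ) (hAv : Aᵀ.mulVec v = lam • v)
    (q₁ : ℝ) (hq₁ : 0 ≤ q₁)
    (r₁ : ℝ) (hr₁ : r₁ = v ⬝ᵥ (B * R₁ * Bᵀ).mulVec v) (hr₁pos : 0 < r₁)
    (p₁ : ℝ) (hp₁ : p₁ = (lam + Real.sqrt (lam ^ 2 + q₁ * r₁)) / r₁)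
    (P₁ : Matrix (Fin n) (Fin n) ℝ) (hP₁ : P₁ = p₁ • Matrix.vecMulVec v v) :
    P₁.PosSemidef ∧
    P₁ * A + Aᵀ * P₁ - P₁ * B * R₁ * Bᵀ * P₁ + q₁ • Matrix.vecMulVec v v = 0 := by
  have hnn : (0:ℝ) ≤ lam ^ 2 + q₁ * r₁ := by positivity
  set s := Real.sqrt (lam ^ 2 + q₁ * r₁) with hs
  have hs2 : s ^ 2 = lam ^ 2 + q₁ * r₁ := Real.sq_sqrt hnn
  have hslam : -lam ≤ s := by
    have h1 : |lam| ≤ s := by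
      rw [hs, ← Real.sqrt_sq_eq_abs]
      exact Real.sqrt_le_sqrt (by nlinarith)
    linarith [neg_abs_le lam]
  have hp₁nn : 0 ≤ p₁ := by
    rw [hp₁]
    apply div_nonneg _ hr₁pos.le
    linarith
  have hscalar : p₁ * lam + lam * p₁ - p₁ * r₁ * p₁ + q₁ = 0 := by
    have hr₁ne : r₁ ≠ 0 := hr₁pos.ne'
    rw [hp₁]
    field_simp
    nlinarith [hs2]
  constructor
  · rw [hP₁]
    refine Matrix.PosSemidef.of_dotProduct_mulVec_nonneg ?_ ?_
    · unfold Matrix.IsHermitian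
      ext i j
      simp [Matrix.vecMulVec_apply, mul_comm]
    · intro x
      have hx : x ⬝ᵥ (p₁ • Matrix.vecMulVec v v).mulVec x = p₁ * ((v ⬝ᵥ x) * (x ⬝ᵥ v)) := by
        rw [Matrix.smul_mulVec, vecMulVec_mulVec', dotProduct_smul,
          dotProduct_smul, smul_eq_mul, smul_eq_mul]
      rw [star_trivial, hx, dotProduct_comm x v]
      have : (0:ℝ) ≤ (v ⬝ᵥ x) * (v ⬝ᵥ x) := mul_self_nonneg _
      nlinarith
  · have h1 : Matrix.vecMulVec v v * A = lam • Matrix.vecMulVec v v := by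
      rw [vecMulVec_mul_left', hAv]
      ext i j
      simp [Matrix.vecMulVec_apply, mul_comm, mul_assoc, mul_left_comm]
    have h2 : Aᵀ * Matrix.vecMulVec v v = lam • Matrix.vecMulVec v v := by
      rw [mul_vecMulVec_left', hAv]
      ext i j
      simp [Matrix.vecMulVec_apply, mul_assoc]
    have h3 : Matrix.vecMulVec v v * (B * R₁ * Bᵀ) * Matrix.vecMulVec v v
        = r₁ • Matrix.vecMulVec v v := by
      rw [mul_assoc, mul_vecMulVec_left', vecMulVec_mul_vecMulVec', hr₁]
    have hassoc : P₁ * B * R₁ * Bᵀ * P₁ = P₁ * (B * R₁ * Bᵀ) * P₁ := by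
      simp only [Matrix.mul_assoc]
    rw [hassoc, hP₁]
    simp only [smul_mul_assoc, mul_smul_comm, h1, h2, h3, smul_smul]
    rw [← add_smul, ← sub_smul, ← add_smul]
    convert zero_smul ℝ (Matrix.vecMulVec v v) using 2
    linear_combination hscalar
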